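/- Suppose the integer pairs (d₁, d₂) and (ka, kb) with (a,b) coprime positive integers and k ≥ 1 satisfy (kab+1)/(kb²) ≥ d₁/d₂ > a/b. Then there exist no integers a₁, b₁ with 0 ≤ a₁ ≤ ka, 0 ≤ b₁ ≤ kb and d₁/d₂ > a₁/b₁ > a/b. -/
import Mathlib


/-- Suppose `(a,b)` are coprime positive integers, `k ≥ 1`, and `d₁, d₂` are positive
integers with `(kab+1)/(kb²) ≥ d₁/d₂ > a/b` (written division-free).  Then there are
no integers `a₁, b₁` with `0 ≤ a₁ ≤ ka`, `0 ≤ b₁ ≤ kb` and `d₁/d₂ > a₁/b₁ > a/b`. -/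
theorem stmt5 (a b k d₁ d₂ : ℕ) (hab : Nat.Coprime a b) (ha : 0 < a) (hb : 0 < b)
    (hk : 1 ≤ k) (hd₁ : 0 < d₁) (hd₂ : 0 < d₂)
    (h1 : k * b ^ 2 * d₁ ≤ (k * a * b + 1) * d₂) (h2 : a * d₂ < b * d₁) :
    ¬ ∃ a₁ b₁ : ℕ, a₁ ≤ k * a ∧ b₁ ≤ k * b ∧ d₂ * a₁ < d₁ * b₁ ∧ b₁ * a < a₁ * b := by
  rintro ⟨a₁, b₁, h3, h4, h5, h6⟩
  -- from h6 : b₁ * a + 1 ≤ a₁ * b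
  have key : b₁ * a + 1 ≤ a₁ * b := h6
  -- kb² a₁ ≥ (kab+1) b₁
  have hmain : (k * a * b + 1) * b₁ ≤ k * b ^ 2 * a₁ := by nlinarith [key, h4]
  -- combine with h1 and h5
  nlinarith [Nat.mul_le_mul_left d₂ hmain, Nat.mul_le_mul_right b₁ h1,
    Nat.mul_lt_mul_of_lt_of_le h5 (le_refl (k * b ^ 2)) (by positivity)]
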